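/- Let M : ℝ → ℝ be a positive differentiable function, v : ℝ → ℝ³ a differentiable velocity and f : ℝ → ℝ³ a force such that d/dt(M(t)·v(t)) = f(t) and c²·dM/dt = f(t)·v(t) for all t (with c > 0). Then the quantity M(t)² − c⁻²·M(t)²·|v(t)|² is constant in t. -/

import Mathlib

open scoped RealInnerProductSpace

/-- If `M` is a positive differentiable mass, `v` a differentiable velocity and `f` a force
with `d/dt (M v) = f` and `c² M' = ⟪f, v⟫`, then `M² − c⁻² M² ‖v‖²` is constant. -/
theorem stmt0 (c : ℝ) (hc : 0 < c)
    (M : ℝ → ℝ) (v f : ℝ → EuclideanSpace ℝ (Fin 3))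
    (hMpos : ∀ t, 0 < M t)
    (hMdiff : Differentiable ℝ M) (hvdiff : Differentiable ℝ v)
    (hNewton : ∀ t, HasDerivAt (fun s => M s • v s) (f t) t)
    (hEnergy : ∀ t, c ^ 2 * deriv M t = ⟪f t, v t⟫) :
    ∀ s t : ℝ,
      M s ^ 2 - c⁻¹ ^ 2 * M s ^ 2 * ‖v s‖ ^ 2
        = M t ^ 2 - c⁻¹ ^ 2 * M t ^ 2 * ‖v t‖ ^ 2 := by
  have key : ∀ s t : ℝ,
      M s ^ 2 - c⁻¹ ^ 2 * ⟪M s • v s, M s • v s⟫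
        = M t ^ 2 - c⁻¹ ^ 2 * ⟪M t • v t, M t • v t⟫ := by
    have hderiv : ∀ t : ℝ, HasDerivAt
        (fun s => M s ^ 2 - c⁻¹ ^ 2 * ⟪M s • v s, M s • v s⟫) 0 t := by
      intro t
      have hM : HasDerivAt M (deriv M t) t := (hMdiff t).hasDerivAt
      have hM2 : HasDerivAt (fun s => M s ^ 2) (2 * M t * deriv M t) t := by
        exact (hM.pow 2).congr_deriv (by norm_num)
      have hinner : HasDerivAt (fun s => ⟪M s • v s, M s • v s⟫)
          (⟪M t • v t, f t⟫ + ⟪f t, M t • v t⟫) t :=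
        (hNewton t).inner ℝ (hNewton t)
      have hfin := hM2.sub (hinner.const_mul (c⁻¹ ^ 2))
      have hE := hEnergy t
      have hz : 2 * M t * deriv M t -
          c⁻¹ ^ 2 * (⟪M t • v t, f t⟫ + ⟪f t, M t • v t⟫) = 0 := by
        rw [real_inner_smul_left, real_inner_smul_right, real_inner_comm (f t) (v t), ← hE]
        field_simp
        ring
      rw [hz] at hfin; exact hfin
    intro s t
    have hdiff : Differentiable ℝ (fun s => M s ^ 2 - c⁻¹ ^ 2 * ⟪M s • v s, M s • v s⟫) :=
      fun x => (hderiv x).differentiableAt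
    exact is_const_of_deriv_eq_zero hdiff (fun x => (hderiv x).deriv) s t
  intro s t
  have hs := key s t
  simp only [real_inner_smul_left, real_inner_smul_right,
    real_inner_self_eq_norm_sq, norm_smul, mul_pow, Real.norm_eq_abs, sq_abs] at hs
  ring_nf at hs ⊢
  linarith [hs]
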